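/- For distinct variables x_1, ..., x_N, q ≠ 0, and k ≥ 0, the function m_k^{(q)}(x) = Σ_i (∏_{j≠i}(x_i - x_j - q)/(x_i - x_j)) x_i^k equals Σ_{l=1}^N ((-q)^{l-1}/l!) Σ over distinct indices i(1),...,i(l) of h_{k-l+1}(x_{i(1)},...,x_{i(l)}), where h_m is the complete homogeneous symmetric polynomial of degree m (with h_m = 0 for m < 0). In particular m_k^{(q)} is a symmetric polynomial in x_1, ..., x_N. -/

import Mathlib

open Finset


noncomputable def EE (l m : ℕ) (y : Fin l → ℝ) : ℝ :=
  ∑ c ∈ Finset.Nat.antidiagonalTuple l m, ∏ j, y j ^ c j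

lemma EE_zero (l : ℕ) (y : Fin l → ℝ) : EE l 0 y = 1 := by
  simp [EE, Finset.Nat.antidiagonalTuple_zero_right]

lemma EE_one (m : ℕ) (y : Fin 1 → ℝ) : EE 1 m y = y 0 ^ m := by
  simp [EE, Finset.Nat.antidiagonalTuple_one]

lemma EE_perm (l m : ℕ) (y : Fin l → ℝ) (σ : Equiv.Perm (Fin l)) :
    EE l m (y ∘ σ) = EE l m y := by
  unfold EE
  refine Finset.sum_nbij' (fun c => c ∘ σ.symm) (fun c => c ∘ σ) ?_ ?_ ?_ ?_ ?_
  · intro c hc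
    rw [Finset.Nat.mem_antidiagonalTuple] at hc ⊢
    rw [← hc]; exact Equiv.sum_comp σ.symm c
  · intro c hc
    rw [Finset.Nat.mem_antidiagonalTuple] at hc ⊢
    rw [← hc]; exact Equiv.sum_comp σ c
  · intro c _; ext j; simp
  · intro c _; ext j; simp
  · intro c _
    show ∏ j, y (σ j) ^ c j = ∏ j, y j ^ c (σ.symm j)
    rw [← Equiv.prod_comp σ (fun j => y j ^ c (σ.symm j))]
    apply Finset.prod_congr rfl; intro j _; simp

lemma EE_cons (l m : ℕ) (y : Fin (l + 1) → ℝ) :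
    EE (l + 1) m y = ∑ ab ∈ Finset.HasAntidiagonal.antidiagonal m, y 0 ^ ab.1 * EE l ab.2 (y ∘ Fin.succ) := by
  unfold EE
  simp_rw [Finset.mul_sum]
  rw [Finset.sum_sigma']
  refine Finset.sum_nbij'
    (i := fun c => (⟨(c 0, ∑ j, c (Fin.succ j)), c ∘ Fin.succ⟩ : Σ _ : ℕ × ℕ, Fin l → ℕ))
    (j := fun p => Fin.cons p.1.1 p.2) ?_ ?_ ?_ ?_ ?_
  · intro c hc
    rw [Finset.Nat.mem_antidiagonalTuple] at hc
    refine Finset.mem_sigma.mpr ⟨?_, ?_⟩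
    · rw [Finset.HasAntidiagonal.mem_antidiagonal, ← hc, Fin.sum_univ_succ]
    · rw [Finset.Nat.mem_antidiagonalTuple]; rfl
  · intro p hp
    rw [Finset.mem_sigma, Finset.HasAntidiagonal.mem_antidiagonal, Finset.Nat.mem_antidiagonalTuple] at hp
    rw [Finset.Nat.mem_antidiagonalTuple, Fin.sum_univ_succ]
    simp [hp.2, hp.1]
  · intro c hc
    ext j
    refine Fin.cases ?_ ?_ j
    · simp
    · intro i; simp
  · intro p hp
    refine Sigma.ext ?_ (heq_of_eq ?_)
    · have h2 := Finset.Nat.mem_antidiagonalTuple.mp (Finset.mem_sigma.mp hp).2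
      simp only [Fin.cons_zero, Fin.cons_succ]
      rw [Prod.ext_iff]
      exact ⟨rfl, by simpa using h2⟩
    · ext j; simp
  · intro c hc
    rw [Fin.prod_univ_succ]
    simp [Function.comp]

lemma EE_newton (l m : ℕ) (y : Fin (l + 1) → ℝ) :
    EE (l + 1) (m + 1) y = EE l (m + 1) (y ∘ Fin.succ) + y 0 * EE (l + 1) m y := by
  rw [EE_cons, Finset.Nat.sum_antidiagonal_succ, EE_cons l m y, Finset.mul_sum]
  simp only [pow_zero, one_mul, pow_succ]
  congr 1
  apply Finset.sum_congr rfl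
  intro p _
  ring

lemma EE_newton_last (l m : ℕ) (y : Fin (l + 1) → ℝ) :
    EE (l + 1) (m + 1) y
      = EE l (m + 1) (y ∘ Fin.castSucc) + y (Fin.last l) * EE (l + 1) m y := by
  set σ : Equiv.Perm (Fin (l + 1)) := (finRotate (l + 1)).symm with hσ
  have hσ0 : σ 0 = Fin.last l := by
    rw [hσ, Equiv.symm_apply_eq, finRotate_last]
  have hσs : ∀ i : Fin l, σ i.succ = i.castSucc := by
    intro i
    rw [hσ, Equiv.symm_apply_eq, finRotate_succ_apply, Fin.coeSucc_eq_succ]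
  have h1 : (y ∘ σ) ∘ Fin.succ = y ∘ Fin.castSucc := by
    ext i; simp [hσs i]
  have := EE_newton l m (y ∘ σ)
  rw [EE_perm _ _ y σ, EE_perm _ _ y σ, h1] at this
  rw [this]
  simp [hσ0]

noncomputable def EE' (l k : ℕ) (y : Fin l → ℝ) : ℝ :=
  if l ≤ k + 1 then EE l (k + 1 - l) y else 0

lemma EE'_diff (l k : ℕ) (y : Fin (l + 2) → ℝ) :
    EE' (l + 1) k (y ∘ Fin.succ) - EE' (l + 1) k (y ∘ Fin.castSucc)
      = (y (Fin.last (l + 1)) - y 0) * EE' (l + 2) k y := by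
  rcases lt_trichotomy (l + 1) (k + 1) with h | h | h
  · have h1 : l + 1 ≤ k + 1 := le_of_lt h
    have h2 : l + 2 ≤ k + 1 := h
    have hm : k + 1 - (l + 1) = (k + 1 - (l + 2)) + 1 := by omega
    have e1 : EE' (l + 1) k (y ∘ Fin.succ) = EE (l + 1) (k + 1 - (l + 2) + 1) (y ∘ Fin.succ) := by
      rw [EE', if_pos h1, hm]
    have e2 : EE' (l + 1) k (y ∘ Fin.castSucc)
        = EE (l + 1) (k + 1 - (l + 2) + 1) (y ∘ Fin.castSucc) := by
      rw [EE', if_pos h1, hm]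
    have e3 : EE' (l + 2) k y = EE (l + 2) (k + 1 - (l + 2)) y := by
      rw [EE', if_pos h2]
    rw [e1, e2, e3]
    have n1 := EE_newton (l + 1) (k + 1 - (l + 2)) y
    have n2 := EE_newton_last (l + 1) (k + 1 - (l + 2)) y
    have : EE (l + 1) (k + 1 - (l + 2) + 1) (y ∘ Fin.succ)
        - EE (l + 1) (k + 1 - (l + 2) + 1) (y ∘ Fin.castSucc)
        = (EE (l + 1 + 1) (k + 1 - (l + 2) + 1) y - y 0 * EE (l + 1 + 1) (k + 1 - (l + 2)) y)
          - (EE (l + 1 + 1) (k + 1 - (l + 2) + 1) y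
            - y (Fin.last (l + 1)) * EE (l + 1 + 1) (k + 1 - (l + 2)) y) := by
      linear_combination n2 - n1
    rw [this]
    show _ = (y (Fin.last (l + 1)) - y 0) * EE (l + 1 + 1) (k + 1 - (l + 2)) y
    ring
  · have h1 : l + 1 ≤ k + 1 := le_of_eq h
    have h2 : ¬ (l + 2 ≤ k + 1) := by omega
    have hm : k + 1 - (l + 1) = 0 := by omega
    have e1 : EE' (l + 1) k (y ∘ Fin.succ) = 1 := by rw [EE', if_pos h1, hm, EE_zero]
    have e2 : EE' (l + 1) k (y ∘ Fin.castSucc) = 1 := by rw [EE', if_pos h1, hm, EE_zero]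
    have e3 : EE' (l + 2) k y = 0 := by rw [EE', if_neg h2]
    rw [e1, e2, e3]; ring
  · have h1 : ¬ (l + 1 ≤ k + 1) := by omega
    have h2 : ¬ (l + 2 ≤ k + 1) := by omega
    have e1 : EE' (l + 1) k (y ∘ Fin.succ) = 0 := by rw [EE', if_neg h1]
    have e2 : EE' (l + 1) k (y ∘ Fin.castSucc) = 0 := by rw [EE', if_neg h1]
    have e3 : EE' (l + 2) k y = 0 := by rw [EE', if_neg h2]
    rw [e1, e2, e3]; ring

noncomputable def SS (l k : ℕ) (y : Fin l → ℝ) : ℝ :=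
  ∑ i, y i ^ k * ∏ j ∈ Finset.univ.erase i, (y i - y j)⁻¹

lemma image_erase_succ (l : ℕ) (i : Fin (l + 1)) :
    (Finset.univ.erase i).image Fin.succ
      = (Finset.univ.erase (Fin.succ i)).erase (0 : Fin (l + 2)) := by
  ext j'
  simp only [Finset.mem_image, Finset.mem_erase, Finset.mem_univ, and_true]
  constructor
  · rintro ⟨j, hj, rfl⟩
    exact ⟨Fin.succ_ne_zero j, fun h => hj (Fin.succ_injective _ h)⟩
  · rintro ⟨h0, hi⟩
    obtain ⟨j, rfl⟩ := Fin.exists_succ_eq_of_ne_zero h0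
    exact ⟨j, fun h => hi (by rw [h]), rfl⟩

lemma image_erase_castSucc (l : ℕ) (i : Fin (l + 1)) :
    (Finset.univ.erase i).image Fin.castSucc
      = (Finset.univ.erase (Fin.castSucc i)).erase (Fin.last (l + 1)) := by
  ext j'
  simp only [Finset.mem_image, Finset.mem_erase, Finset.mem_univ, and_true]
  constructor
  · rintro ⟨j, hj, rfl⟩
    exact ⟨Fin.castSucc_lt_last j |>.ne, fun h => hj (Fin.castSucc_injective _ h)⟩
  · rintro ⟨h0, hi⟩
    obtain ⟨j, rfl⟩ := Fin.exists_castSucc_eq.mpr h0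
    exact ⟨j, fun h => hi (by rw [h]), rfl⟩

lemma SS_rec (l k : ℕ) (y : Fin (l + 2) → ℝ) (hy : Function.Injective y) :
    SS (l + 1) k (y ∘ Fin.succ) - SS (l + 1) k (y ∘ Fin.castSucc)
      = (y (Fin.last (l + 1)) - y 0) * SS (l + 2) k y := by
  classical
  set F : Fin (l + 2) → ℝ :=
    fun i' => y i' ^ k * ∏ j ∈ Finset.univ.erase i', (y i' - y j)⁻¹ with hF
  set g1 : Fin (l + 2) → ℝ :=
    fun i' => y i' ^ k * ∏ j ∈ (Finset.univ.erase i').erase 0, (y i' - y j)⁻¹ with hg1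
  set g2 : Fin (l + 2) → ℝ :=
    fun i' => y i' ^ k *
      ∏ j ∈ (Finset.univ.erase i').erase (Fin.last (l + 1)), (y i' - y j)⁻¹ with hg2
  have hlast0 : (Fin.last (l + 1)) ≠ (0 : Fin (l + 2)) := by
    simp [Fin.ext_iff]
  -- step 1 : reindex the two smaller sums
  have hs1 : SS (l + 1) k (y ∘ Fin.succ) = ∑ i : Fin (l + 1), g1 (Fin.succ i) := by
    unfold SS
    apply Finset.sum_congr rfl
    intro i _
    simp only [Function.comp_apply, hg1]
    congr 1
    rw [← image_erase_succ l i, Finset.prod_image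
      (fun a _ b _ h => Fin.succ_injective _ h)]
  have hs2 : SS (l + 1) k (y ∘ Fin.castSucc) = ∑ i : Fin (l + 1), g2 (Fin.castSucc i) := by
    unfold SS
    apply Finset.sum_congr rfl
    intro i _
    simp only [Function.comp_apply, hg2]
    congr 1
    rw [← image_erase_castSucc l i, Finset.prod_image
      (fun a _ b _ h => Fin.castSucc_injective _ h)]
  -- step 2 : complete the sums
  have hs1' : ∑ i : Fin (l + 1), g1 (Fin.succ i) = (∑ i', g1 i') - g1 0 := by
    conv_rhs => rw [Fin.sum_univ_succ]
    ring
  have hs2' : ∑ i : Fin (l + 1), g2 (Fin.castSucc i)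
      = (∑ i', g2 i') - g2 (Fin.last (l + 1)) := by
    conv_rhs => rw [Fin.sum_univ_castSucc]
    ring
  -- pointwise identities
  have hg1F : ∀ i' : Fin (l + 2), i' ≠ 0 → g1 i' = (y i' - y 0) * F i' := by
    intro i' h0
    have hmem : (0 : Fin (l + 2)) ∈ Finset.univ.erase i' := by
      simp [Ne.symm h0]
    have hsplit : (y i' - y 0)⁻¹ * ∏ j ∈ (Finset.univ.erase i').erase 0, (y i' - y j)⁻¹
        = ∏ j ∈ Finset.univ.erase i', (y i' - y j)⁻¹ :=
      Finset.mul_prod_erase _ (fun j => (y i' - y j)⁻¹) hmem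
    have hne : y i' - y 0 ≠ 0 := sub_ne_zero.mpr (fun h => h0 (hy h))
    have hprod : ∏ j ∈ (Finset.univ.erase i').erase 0, (y i' - y j)⁻¹
        = (y i' - y 0) * ∏ j ∈ Finset.univ.erase i', (y i' - y j)⁻¹ := by
      rw [← hsplit, ← mul_assoc, mul_inv_cancel₀ hne, one_mul]
    simp only [hg1, hF]
    rw [hprod]
    ring
  have hg2F : ∀ i' : Fin (l + 2), i' ≠ Fin.last (l + 1) →
      g2 i' = (y i' - y (Fin.last (l + 1))) * F i' := by
    intro i' h0
    have hmem : Fin.last (l + 1) ∈ Finset.univ.erase i' := by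
      simp [Ne.symm h0]
    have hsplit : (y i' - y (Fin.last (l + 1)))⁻¹
          * ∏ j ∈ (Finset.univ.erase i').erase (Fin.last (l + 1)), (y i' - y j)⁻¹
        = ∏ j ∈ Finset.univ.erase i', (y i' - y j)⁻¹ :=
      Finset.mul_prod_erase _ (fun j => (y i' - y j)⁻¹) hmem
    have hne : y i' - y (Fin.last (l + 1)) ≠ 0 := sub_ne_zero.mpr (fun h => h0 (hy h))
    have hprod : ∏ j ∈ (Finset.univ.erase i').erase (Fin.last (l + 1)), (y i' - y j)⁻¹
        = (y i' - y (Fin.last (l + 1))) * ∏ j ∈ Finset.univ.erase i', (y i' - y j)⁻¹ := by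
      rw [← hsplit, ← mul_assoc, mul_inv_cancel₀ hne, one_mul]
    simp only [hg2, hF]
    rw [hprod]
    ring
  have hg10 : g1 0 = F 0 := by
    simp only [hg1, hF, Finset.erase_idem]
  have hg2l : g2 (Fin.last (l + 1)) = F (Fin.last (l + 1)) := by
    simp only [hg2, hF, Finset.erase_idem]
  -- main cancellation
  have key : ∑ i', (g1 i' - g2 i' - (y (Fin.last (l + 1)) - y 0) * F i')
      = g1 0 - g2 (Fin.last (l + 1)) := by
    rw [← Finset.add_sum_erase _ _ (Finset.mem_univ (0 : Fin (l + 2))),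
      ← Finset.add_sum_erase _ _ (show Fin.last (l + 1) ∈ Finset.univ.erase 0 by
        simp [hlast0])]
    have h1 : g1 0 - g2 0 - (y (Fin.last (l + 1)) - y 0) * F 0 = g1 0 := by
      rw [hg2F 0 (Ne.symm hlast0)]; ring
    have h2 : g1 (Fin.last (l + 1)) - g2 (Fin.last (l + 1))
        - (y (Fin.last (l + 1)) - y 0) * F (Fin.last (l + 1))
        = - g2 (Fin.last (l + 1)) := by
      rw [hg1F (Fin.last (l + 1)) hlast0]; ring
    have h3 : ∑ i' ∈ (Finset.univ.erase 0).erase (Fin.last (l + 1)),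
        (g1 i' - g2 i' - (y (Fin.last (l + 1)) - y 0) * F i') = 0 := by
      apply Finset.sum_eq_zero
      intro i' hi'
      simp only [Finset.mem_erase] at hi'
      rw [hg1F i' hi'.2.1, hg2F i' hi'.1]
      ring
    rw [h1, h2, h3]
    ring
  rw [hs1, hs2, hs1', hs2']
  have expand : ∑ i', (g1 i' - g2 i' - (y (Fin.last (l + 1)) - y 0) * F i')
      = (∑ i', g1 i') - (∑ i', g2 i')
        - (y (Fin.last (l + 1)) - y 0) * ∑ i', F i' := by
    rw [Finset.sum_sub_distrib, Finset.sum_sub_distrib, Finset.mul_sum]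
  have : SS (l + 2) k y = ∑ i', F i' := rfl
  rw [this]
  rw [expand] at key
  linarith [key]

lemma lagrange (k : ℕ) : ∀ (l : ℕ) (y : Fin (l + 1) → ℝ), Function.Injective y →
    SS (l + 1) k y = EE' (l + 1) k y := by
  intro l
  induction l with
  | zero =>
    intro y _
    have h1 : (1 : ℕ) ≤ k + 1 := Nat.succ_le_succ (Nat.zero_le _)
    have : EE' 1 k y = y 0 ^ k := by
      rw [EE', if_pos h1]
      simp [EE_one]
    rw [this, SS]
    simp [Finset.sum_eq_single (0 : Fin 1)]
  | succ l ih =>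
    intro y hy
    have h1 : Function.Injective (y ∘ Fin.succ) := hy.comp (Fin.succ_injective _)
    have h2 : Function.Injective (y ∘ Fin.castSucc) := hy.comp (Fin.castSucc_injective _)
    have hlast0 : (Fin.last (l + 1)) ≠ (0 : Fin (l + 2)) := by simp [Fin.ext_iff]
    have hne : y (Fin.last (l + 1)) - y 0 ≠ 0 :=
      sub_ne_zero.mpr (fun h => hlast0 (hy h))
    have hrec := SS_rec l k y hy
    rw [ih (y ∘ Fin.succ) h1, ih (y ∘ Fin.castSucc) h2, EE'_diff l k y] at hrec
    exact (mul_left_cancel₀ hne hrec).symm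

lemma stepA (N : ℕ) (x : Fin N → ℝ) (hx : Function.Injective x) (q : ℝ) (i : Fin N) :
    ∏ j ∈ Finset.univ.erase i, (x i - x j - q) / (x i - x j)
      = ∑ S ∈ (Finset.univ.erase i).powerset, (-q) ^ S.card * ∏ j ∈ S, (x i - x j)⁻¹ := by
  have hre : ∀ j ∈ Finset.univ.erase i,
      (x i - x j - q) / (x i - x j) = (-q) * (x i - x j)⁻¹ + 1 := by
    intro j hj
    have hne : x i - x j ≠ 0 :=
      sub_ne_zero.mpr (hx.ne (Ne.symm (Finset.ne_of_mem_erase hj)))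
    field_simp
    ring
  rw [Finset.prod_congr rfl hre, Finset.prod_add]
  apply Finset.sum_congr rfl
  intro S _
  rw [Finset.prod_const_one, mul_one, Finset.prod_mul_distrib, Finset.prod_const]

lemma stepB (N : ℕ) (G : Fin N → Finset (Fin N) → ℝ) :
    ∑ i : Fin N, ∑ S ∈ (Finset.univ.erase i).powerset, G i S
      = ∑ T ∈ Finset.univ.powerset.filter Finset.Nonempty, ∑ i ∈ T, G i (T.erase i) := by
  classical
  rw [Finset.sum_sigma', Finset.sum_sigma']
  refine Finset.sum_nbij' (i := fun p => ⟨insert p.1 p.2, p.1⟩)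
    (j := fun p => ⟨p.2, p.1.erase p.2⟩) ?_ ?_ ?_ ?_ ?_
  · rintro ⟨i, S⟩ hp
    simp only [Finset.mem_sigma, Finset.mem_univ, Finset.mem_powerset, true_and] at hp ⊢
    exact ⟨Finset.mem_filter.mpr ⟨Finset.mem_powerset.mpr (Finset.subset_univ _),
      ⟨i, Finset.mem_insert_self _ _⟩⟩, Finset.mem_insert_self _ _⟩
  · rintro ⟨T, i⟩ hp
    simp only [Finset.mem_sigma, Finset.mem_filter, Finset.mem_powerset] at hp ⊢
    refine ⟨Finset.mem_univ _, ?_⟩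
    intro a ha
    rw [Finset.mem_erase] at ha ⊢
    exact ⟨ha.1, Finset.mem_univ a⟩
  · rintro ⟨i, S⟩ hp
    simp only [Finset.mem_sigma, Finset.mem_univ, Finset.mem_powerset, true_and] at hp
    have hiS : i ∉ S := fun h => (Finset.mem_erase.mp (hp h)).1 rfl
    simp [Finset.erase_insert hiS]
  · rintro ⟨T, i⟩ hp
    simp only [Finset.mem_sigma, Finset.mem_filter, Finset.mem_powerset] at hp
    simp [Finset.insert_erase hp.2]
  · rintro ⟨i, S⟩ hp
    simp only [Finset.mem_sigma, Finset.mem_univ, Finset.mem_powerset, true_and] at hp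
    have hiS : i ∉ S := fun h => (Finset.mem_erase.mp (hp h)).1 rfl
    simp [Finset.erase_insert hiS]

lemma image_orderEmb_erase {N l : ℕ} (T : Finset (Fin N)) (h : T.card = l) (a : Fin l) :
    (Finset.univ.erase a).image (T.orderEmbOfFin h)
      = T.erase (T.orderEmbOfFin h a) := by
  ext j
  simp only [Finset.mem_image, Finset.mem_erase, Finset.mem_univ, and_true]
  constructor
  · rintro ⟨b, hb, rfl⟩
    exact ⟨fun hc => hb ((T.orderEmbOfFin h).injective hc),
      Finset.orderEmbOfFin_mem T h b⟩
  · rintro ⟨hne, hj⟩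
    have : j ∈ Set.range (T.orderEmbOfFin h) := by
      rw [Finset.range_orderEmbOfFin]; exact hj
    obtain ⟨b, rfl⟩ := this
    exact ⟨b, fun hc => hne (by rw [hc]), rfl⟩

lemma stepC (N : ℕ) (x : Fin N → ℝ) (k l : ℕ) (T : Finset (Fin N)) (h : T.card = l) :
    SS l k (x ∘ T.orderEmbOfFin h)
      = ∑ i ∈ T, x i ^ k * ∏ j ∈ T.erase i, (x i - x j)⁻¹ := by
  unfold SS
  refine Finset.sum_bij (fun a _ => T.orderEmbOfFin h a) ?_ ?_ ?_ ?_
  · intro a _; exact Finset.orderEmbOfFin_mem T h a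
  · intro a _ b _ hab; exact (T.orderEmbOfFin h).injective hab
  · intro j hj
    have : j ∈ Set.range (T.orderEmbOfFin h) := by
      rw [Finset.range_orderEmbOfFin]; exact hj
    obtain ⟨b, rfl⟩ := this
    exact ⟨b, Finset.mem_univ b, rfl⟩
  · intro a _
    simp only [Function.comp_apply]
    congr 1
    rw [← image_orderEmb_erase T h a,
      Finset.prod_image (fun b _ c _ hbc => (T.orderEmbOfFin h).injective hbc)]

noncomputable def yT (N l : ℕ) (x : Fin N → ℝ) (T : Finset (Fin N)) : Fin l → ℝ :=
  if h : T.card = l then x ∘ T.orderEmbOfFin h else fun _ => 0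

lemma exists_perm (N l : ℕ) (T : Finset (Fin N)) (h : T.card = l)
    (f : Fin l → Fin N) (hf : Function.Injective f) (him : Finset.univ.image f = T) :
    ∃ σ : Equiv.Perm (Fin l), ∀ a, T.orderEmbOfFin h (σ a) = f a := by
  classical
  have hmem : ∀ a, f a ∈ T := by
    intro a; rw [← him]; exact Finset.mem_image_of_mem f (Finset.mem_univ a)
  set ei := T.orderIsoOfFin h with hei
  set g : Fin l → Fin l := fun a => ei.symm ⟨f a, hmem a⟩ with hg
  have hginj : Function.Injective g := by
    intro a b hab
    apply hf
    have := congrArg ei hab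
    simpa [hg] using this
  have hgbij : Function.Bijective g := Finite.injective_iff_bijective.mp hginj
  refine ⟨Equiv.ofBijective g hgbij, fun a => ?_⟩
  simp only [Equiv.ofBijective_apply, hg]
  have : T.orderEmbOfFin h (ei.symm ⟨f a, hmem a⟩)
      = (ei (ei.symm ⟨f a, hmem a⟩) : Fin N) := by
    rw [hei, Finset.coe_orderIsoOfFin_apply]
  rw [this, OrderIso.apply_symm_apply]

lemma EE_fiber (N l m : ℕ) (x : Fin N → ℝ) (T : Finset (Fin N)) (h : T.card = l)
    (f : Fin l → Fin N) (hf : Function.Injective f) (him : Finset.univ.image f = T) :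
    EE l m (x ∘ f) = EE l m (yT N l x T) := by
  obtain ⟨σ, hσ⟩ := exists_perm N l T h f hf him
  have hyT : yT N l x T = x ∘ T.orderEmbOfFin h := by rw [yT, dif_pos h]
  have hcomp : (x ∘ T.orderEmbOfFin h) ∘ σ = x ∘ f := by
    funext a; simp [Function.comp_apply, hσ a]
  rw [hyT, ← hcomp, EE_perm]

lemma fiber_card (N l : ℕ) (T : Finset (Fin N)) (h : T.card = l) :
    ((Finset.univ.filter (fun f : Fin l → Fin N => Function.Injective f)).filter
      (fun f => Finset.univ.image f = T)).card = Nat.factorial l := by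
  classical
  have hset : (Finset.univ.filter (fun f : Fin l → Fin N => Function.Injective f)).filter
        (fun f => Finset.univ.image f = T)
      = Finset.univ.image (fun σ : Equiv.Perm (Fin l) =>
          (fun a => T.orderEmbOfFin h (σ a))) := by
    ext f
    simp only [Finset.mem_filter, Finset.mem_univ, true_and, Finset.mem_image]
    constructor
    · rintro ⟨hf, him⟩
      obtain ⟨σ, hσ⟩ := exists_perm N l T h f hf him
      exact ⟨σ, funext hσ⟩
    · rintro ⟨σ, rfl⟩
      refine ⟨fun a b hab => σ.injective ((T.orderEmbOfFin h).injective hab), ?_⟩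
      ext j
      simp only [Finset.mem_image, Finset.mem_univ, true_and]
      constructor
      · rintro ⟨a, rfl⟩; exact Finset.orderEmbOfFin_mem T h (σ a)
      · intro hj
        have : j ∈ Set.range (T.orderEmbOfFin h) := by
          rw [Finset.range_orderEmbOfFin]; exact hj
        obtain ⟨b, rfl⟩ := this
        exact ⟨σ.symm b, by rw [Equiv.apply_symm_apply]⟩
  rw [hset, Finset.card_image_of_injective _ (fun σ τ hst =>
    Equiv.ext fun a => (T.orderEmbOfFin h).injective (congrFun hst a))]
  rw [Finset.card_univ, Fintype.card_perm, Fintype.card_fin]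

lemma stepD (N l m : ℕ) (x : Fin N → ℝ) :
    ∑ f ∈ Finset.univ.filter (fun f : Fin l → Fin N => Function.Injective f), EE l m (x ∘ f)
      = ∑ T ∈ Finset.univ.powerset.filter (fun T : Finset (Fin N) => T.card = l),
          (Nat.factorial l : ℝ) * EE l m (yT N l x T) := by
  classical
  have hmaps : ∀ f ∈ Finset.univ.filter (fun f : Fin l → Fin N => Function.Injective f),
      Finset.univ.image f ∈ Finset.univ.powerset.filter
        (fun T : Finset (Fin N) => T.card = l) := by
    intro f hf
    rw [Finset.mem_filter] at hf ⊢
    exact ⟨Finset.mem_powerset.mpr (Finset.subset_univ _), by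
      rw [Finset.card_image_of_injective _ hf.2, Finset.card_univ, Fintype.card_fin]⟩
  rw [← Finset.sum_fiberwise_of_maps_to hmaps (fun f => EE l m (x ∘ f))]
  apply Finset.sum_congr rfl
  intro T hT
  rw [Finset.mem_filter] at hT
  have h1 : ∀ f ∈ (Finset.univ.filter
        (fun f : Fin l → Fin N => Function.Injective f)).filter
        (fun f => Finset.univ.image f = T),
      EE l m (x ∘ f) = EE l m (yT N l x T) := by
    intro f hf
    rw [Finset.mem_filter, Finset.mem_filter] at hf
    exact EE_fiber N l m x T hT.2 f hf.1.2 hf.2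
  rw [Finset.sum_congr rfl h1, Finset.sum_const, fiber_card N l T hT.2, nsmul_eq_mul]

lemma lagrange' (k l : ℕ) (hl : 0 < l) (y : Fin l → ℝ) (hy : Function.Injective y) :
    SS l k y = EE' l k y := by
  obtain ⟨l', rfl⟩ : ∃ l', l = l' + 1 := ⟨l - 1, by omega⟩
  exact lagrange k l' y hy

lemma perm_image_erase (N : ℕ) (σ : Equiv.Perm (Fin N)) (i : Fin N) :
    (Finset.univ.erase i).image σ = Finset.univ.erase (σ i) := by
  ext j'
  simp only [Finset.mem_image, Finset.mem_erase, Finset.mem_univ, and_true]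
  constructor
  · rintro ⟨j, hj, rfl⟩
    exact fun h => hj (σ.injective h)
  · intro hj
    exact ⟨σ.symm j', fun h => hj (by rw [← h, Equiv.apply_symm_apply]),
      Equiv.apply_symm_apply _ _⟩

/-- Expansion of `m_k^{(q)}` in complete homogeneous symmetric polynomials:
`m_k^{(q)}(x) = Σ_{l=1}^N ((-q)^{l-1}/l!) Σ_{i(1),…,i(l) distinct}
  h_{k-l+1}(x_{i(1)},…,x_{i(l)})` (with `h_m = 0` for `m < 0`);
in particular `m_k^{(q)}` is symmetric under permutations of the variables. -/
theorem qPP_complete_homogeneous_expansion (N : ℕ) (x : Fin N → ℝ)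
    (hx : Function.Injective x) (q : ℝ) (hq : q ≠ 0) (k : ℕ) :
    (∑ i, (∏ j ∈ Finset.univ.erase i, (x i - x j - q) / (x i - x j)) * x i ^ k =
      ∑ l ∈ Finset.Icc 1 N,
        if l ≤ k + 1 then
          (-q) ^ (l - 1) / (Nat.factorial l : ℝ) *
            ∑ f ∈ Finset.univ.filter (fun f : Fin l → Fin N => Function.Injective f),
              ∑ c ∈ Finset.Nat.antidiagonalTuple l (k + 1 - l), ∏ j, x (f j) ^ c j
        else 0) ∧
    ∀ σ : Equiv.Perm (Fin N),
      ∑ i, (∏ j ∈ Finset.univ.erase i,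
          (x (σ i) - x (σ j) - q) / (x (σ i) - x (σ j))) * x (σ i) ^ k =
      ∑ i, (∏ j ∈ Finset.univ.erase i, (x i - x j - q) / (x i - x j)) * x i ^ k := by
  classical
  constructor
  · -- main identity
    have hA : ∀ i : Fin N,
        (∏ j ∈ Finset.univ.erase i, (x i - x j - q) / (x i - x j)) * x i ^ k
          = ∑ S ∈ (Finset.univ.erase i).powerset,
              ((-q) ^ S.card * ∏ j ∈ S, (x i - x j)⁻¹) * x i ^ k := by
      intro i; rw [stepA N x hx q i, Finset.sum_mul]
    rw [Finset.sum_congr rfl (fun i _ => hA i),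
      stepB N (fun i S => ((-q) ^ S.card * ∏ j ∈ S, (x i - x j)⁻¹) * x i ^ k)]
    have hT1 : ∀ T ∈ Finset.univ.powerset.filter Finset.Nonempty,
        ∑ i ∈ T, ((-q) ^ (T.erase i).card * ∏ j ∈ T.erase i, (x i - x j)⁻¹) * x i ^ k
          = (-q) ^ (T.card - 1) * EE' T.card k (yT N T.card x T) := by
      intro T hT
      rw [Finset.mem_filter] at hT
      have hpos : 0 < T.card := Finset.card_pos.mpr hT.2
      have hy : yT N T.card x T = x ∘ T.orderEmbOfFin rfl := by
        rw [yT, dif_pos rfl]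
      have hinj : Function.Injective (yT N T.card x T) := by
        rw [hy]; exact hx.comp (T.orderEmbOfFin rfl).injective
      rw [← lagrange' k T.card hpos _ hinj, hy, stepC N x k T.card T rfl, Finset.mul_sum]
      apply Finset.sum_congr rfl
      intro i hi
      rw [Finset.card_erase_of_mem hi]
      ring
    have step1 : ∑ T ∈ Finset.univ.powerset.filter Finset.Nonempty,
        ∑ i ∈ T, ((-q) ^ (T.erase i).card * ∏ j ∈ T.erase i, (x i - x j)⁻¹) * x i ^ k
        = ∑ T ∈ Finset.univ.powerset.filter Finset.Nonempty,
          (-q) ^ (T.card - 1) * EE' T.card k (yT N T.card x T) :=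
      Finset.sum_congr rfl hT1
    rw [step1]
    have hmaps2 : ∀ T ∈ (Finset.univ : Finset (Fin N)).powerset.filter Finset.Nonempty,
        T.card ∈ Finset.Icc 1 N := by
      intro T hT
      rw [Finset.mem_filter] at hT
      rw [Finset.mem_Icc]
      exact ⟨Finset.card_pos.mpr hT.2, le_trans (Finset.card_le_univ T) (by simp)⟩
    rw [← Finset.sum_fiberwise_of_maps_to hmaps2
      (fun T => (-q) ^ (T.card - 1) * EE' T.card k (yT N T.card x T))]
    apply Finset.sum_congr rfl
    intro l hl
    rw [Finset.mem_Icc] at hl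
    have hsets : (Finset.univ.powerset.filter Finset.Nonempty).filter
          (fun T : Finset (Fin N) => T.card = l)
        = Finset.univ.powerset.filter (fun T : Finset (Fin N) => T.card = l) := by
      ext T
      simp only [Finset.mem_filter, Finset.mem_powerset]
      constructor
      · rintro ⟨⟨h1, _⟩, h3⟩; exact ⟨h1, h3⟩
      · rintro ⟨h1, h3⟩
        exact ⟨⟨h1, Finset.card_pos.mp (by omega)⟩, h3⟩
    rw [hsets]
    have hterms : ∀ T ∈ Finset.univ.powerset.filter
          (fun T : Finset (Fin N) => T.card = l),
        (-q) ^ (T.card - 1) * EE' T.card k (yT N T.card x T)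
          = (-q) ^ (l - 1) * EE' l k (yT N l x T) := by
      intro T hT
      rw [Finset.mem_filter] at hT
      have hc := hT.2
      subst hc
      rfl
    rw [Finset.sum_congr rfl hterms]
    by_cases hlk : l ≤ k + 1
    · rw [if_pos hlk]
      have hf : ∀ f ∈ Finset.univ.filter (fun f : Fin l → Fin N => Function.Injective f),
          ∑ c ∈ Finset.Nat.antidiagonalTuple l (k + 1 - l), ∏ j, x (f j) ^ c j
            = EE l (k + 1 - l) (x ∘ f) := by
        intro f _; rfl
      rw [Finset.sum_congr rfl hf, stepD N l (k + 1 - l) x, Finset.mul_sum]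
      apply Finset.sum_congr rfl
      intro T _
      rw [EE', if_pos hlk]
      have hfac : (Nat.factorial l : ℝ) ≠ 0 := Nat.cast_ne_zero.mpr (Nat.factorial_ne_zero l)
      field_simp
    · rw [if_neg hlk]
      apply Finset.sum_eq_zero
      intro T _
      rw [EE', if_neg hlk, mul_zero]
  · -- symmetry
    intro σ
    have hterm : ∀ i : Fin N,
        (∏ j ∈ Finset.univ.erase i, (x (σ i) - x (σ j) - q) / (x (σ i) - x (σ j)))
            * x (σ i) ^ k
          = (∏ j ∈ Finset.univ.erase (σ i), (x (σ i) - x j - q) / (x (σ i) - x j))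
            * x (σ i) ^ k := by
      intro i
      congr 1
      rw [← perm_image_erase N σ i, Finset.prod_image
        (fun a _ b _ hab => σ.injective hab)]
    rw [Finset.sum_congr rfl (fun i _ => hterm i)]
    exact Equiv.sum_comp σ (fun i => (∏ j ∈ Finset.univ.erase i,
      (x i - x j - q) / (x i - x j)) * x i ^ k)
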